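/- With the above setup and assuming convergence of all deviation-matrix integrals, (I_p ⊗ 1₂ᵀ) D♯_{Q̃} (I_p ⊗ 1₂) = (I_p ⊗ 1₂ᵀ) D♯_{Q̄} (I_p ⊗ 1₂) = 2 D♯_G, where D♯_Q denotes the deviation matrix of generator Q. -/

import Mathlib

open Matrix MeasureTheory

/-- `Q` is a generator matrix of a finite CTMC: nonnegative off-diagonal entries
and zero row sums. -/
def IsGenerator {n : Type*} [Fintype n] (Q : Matrix n n ℝ) : Prop :=
  (∀ i j, i ≠ j → 0 ≤ Q i j) ∧ ∀ i, ∑ j, Q i j = 0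

/-- Irreducibility of the CTMC with generator `Q`: the transition matrix `e^Q`
is entrywise positive. -/
def IsIrreducibleGen {n : Type*} [Fintype n] [DecidableEq n] (Q : Matrix n n ℝ) : Prop :=
  ∀ i j, 0 < NormedSpace.exp Q i j

/-- `π` is a stationary distribution of the generator `Q`: `πQ = 0`, `π1 = 1`. -/
def IsStationaryDist {n : Type*} [Fintype n] (Q : Matrix n n ℝ) (π : n → ℝ) : Prop :=
  (∀ i, 0 ≤ π i) ∧ (∑ i, π i = 1) ∧ π ᵥ* Q = 0

/-- The rank-one matrix `1π`. -/
def onePi {n : Type*} (π : n → ℝ) : Matrix n n ℝ :=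
  Matrix.of fun _ j => π j

/-- `Ds` is the deviation matrix `D♯ = ∫₀^∞ (e^{Qu} − 1π) du` of `Q`
(entrywise convergent integral). -/
def IsDeviation {n : Type*} [Fintype n] [DecidableEq n] (Q : Matrix n n ℝ) (π : n → ℝ)
    (Ds : Matrix n n ℝ) : Prop :=
  ∀ i j, IntegrableOn (fun u => NormedSpace.exp (u • Q) i j - π j) (Set.Ioi (0:ℝ)) MeasureTheory.volume ∧
    Ds i j = ∫ u in Set.Ioi (0:ℝ), (NormedSpace.exp (u • Q) i j - π j)

/-- `Dt` is the transient deviation matrix `D♯(t) = ∫₀^t (e^{Qu} − 1π) du` of `Q`. -/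
def IsTransientDeviation {n : Type*} [Fintype n] [DecidableEq n] (Q : Matrix n n ℝ) (π : n → ℝ)
    (Dt : ℝ → Matrix n n ℝ) : Prop :=
  ∀ t i j, Dt t i j = ∫ u in Set.Ioc (0:ℝ) t, (NormedSpace.exp (u • Q) i j - π j)

/-- The `p × 2p` matrix `I_p ⊗ 1₂ᵀ`, where the `2p` index set is `Fin p × Fin 2`. -/
def kronA (p : ℕ) : Matrix (Fin p) (Fin p × Fin 2) ℝ :=
  Matrix.of fun i jk => if jk.1 = i then 1 else 0

/-- The slowness condition `λ_i > S_i = ∑_{j≠i} q_{ij} = -G i i` for a generator `G`. -/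
def IsSlow {p : ℕ} (G : Matrix (Fin p) (Fin p) ℝ) (lam : Fin p → ℝ) : Prop :=
  ∀ i, -G i i < lam i

/-- The `2p × 2p` generator `Q̄` of the MTCP associated with a slow MMPP with
modulating generator `G` and rates `λ`: diagonal `2×2` blocks
`[[−λ_i, λ_i − S_i],[λ_i − S_i, −λ_i]]` (note `λ_i − S_i = λ_i + G i i`) and
off-diagonal blocks `q_{ij} I₂`. -/
def Qbar {p : ℕ} (G : Matrix (Fin p) (Fin p) ℝ) (lam : Fin p → ℝ) :
    Matrix (Fin p × Fin 2) (Fin p × Fin 2) ℝ :=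
  Matrix.of fun ik jl =>
    if ik.1 = jl.1 then (if ik.2 = jl.2 then -lam ik.1 else lam ik.1 + G ik.1 ik.1)
    else (if ik.2 = jl.2 then G ik.1 jl.1 else 0)

/-- The `2p × 2p` generator `Q̃` of the coupled MAP built from the MMPP: diagonal
blocks `[[−(λ_i + S_i), λ_i],[λ_i, −(λ_i + S_i)]]` (note `−(λ_i+S_i) = G i i − λ_i`)
and off-diagonal blocks `q_{ij} I₂`. -/
def Qtil {p : ℕ} (G : Matrix (Fin p) (Fin p) ℝ) (lam : Fin p → ℝ) :
    Matrix (Fin p × Fin 2) (Fin p × Fin 2) ℝ :=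
  Matrix.of fun ik jl =>
    if ik.1 = jl.1 then (if ik.2 = jl.2 then G ik.1 ik.1 - lam ik.1 else lam ik.1)
    else (if ik.2 = jl.2 then G ik.1 jl.1 else 0)

/-- The event-intensity matrix `D̄ = Q̄ − diag(Q̄)` of the associated MTCP. -/
def Dbar {p : ℕ} (G : Matrix (Fin p) (Fin p) ℝ) (lam : Fin p → ℝ) :
    Matrix (Fin p × Fin 2) (Fin p × Fin 2) ℝ :=
  Qbar G lam - Matrix.diagonal fun ik => Qbar G lam ik ik

/-- The event-intensity matrix `D̃` of the coupled MMPP: block diagonal with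
blocks `[[0, λ_i],[λ_i, 0]]`. -/
def Dtil {p : ℕ} (lam : Fin p → ℝ) : Matrix (Fin p × Fin 2) (Fin p × Fin 2) ℝ :=
  Matrix.of fun ik jl => if ik.1 = jl.1 ∧ ik.2 ≠ jl.2 then lam ik.1 else 0

/-- The common stationary distribution `π = (1/2) ϑ (I_p ⊗ 1₂ᵀ)` of `Q̄` and `Q̃`. -/
noncomputable def piHat {p : ℕ} (θ : Fin p → ℝ) : Fin p × Fin 2 → ℝ :=
  (1/2 : ℝ) • (θ ᵥ* kronA p)


attribute [local instance] Matrix.linftyOpNormedAddCommGroup Matrix.linftyOpNormedSpace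
  Matrix.linftyOpNormedRing Matrix.linftyOpNormedAlgebra

lemma mul_pow_intertwine {m n : Type*} [Fintype m] [Fintype n] [DecidableEq m] [DecidableEq n]
    (A : Matrix m n ℝ) (Q : Matrix n n ℝ) (G : Matrix m m ℝ) (h : A * Q = G * A) (k : ℕ) :
    A * Q ^ k = G ^ k * A := by
  induction k with
  | zero => simp
  | succ k ih => rw [pow_succ, ← Matrix.mul_assoc, ih, Matrix.mul_assoc, h, ← Matrix.mul_assoc, ← pow_succ]

lemma exp_intertwine {m n : Type*} [Fintype m] [Fintype n] [DecidableEq m] [DecidableEq n]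
    (A : Matrix m n ℝ) (Q : Matrix n n ℝ) (G : Matrix m m ℝ) (h : A * Q = G * A) :
    A * NormedSpace.exp Q = NormedSpace.exp G * A := by
  rw [NormedSpace.exp_eq_tsum (𝕂 := ℝ), NormedSpace.exp_eq_tsum (𝕂 := ℝ)]
  have hQ : Summable (fun k : ℕ => ((Nat.factorial k : ℝ))⁻¹ • Q ^ k) := NormedSpace.expSeries_summable' Q
  have hG : Summable (fun k : ℕ => ((Nat.factorial k : ℝ))⁻¹ • G ^ k) := NormedSpace.expSeries_summable' G
  let L : Matrix n n ℝ →ₗ[ℝ] Matrix m n ℝ :=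
    { toFun := fun M => A * M
      map_add' := fun M N => Matrix.mul_add A M N
      map_smul' := fun c M => (Matrix.mul_smul A c M) }
  let R : Matrix m m ℝ →ₗ[ℝ] Matrix m n ℝ :=
    { toFun := fun M => M * A
      map_add' := fun M N => Matrix.add_mul M N A
      map_smul' := fun c M => (Matrix.smul_mul c M A) }
  have hL := (L.toContinuousLinearMap).map_tsum hQ
  have hR := (R.toContinuousLinearMap).map_tsum hG
  simp only [LinearMap.coe_toContinuousLinearMap', L, R, LinearMap.coe_mk, AddHom.coe_mk] at hL hR
  rw [hL, hR]
  congr 1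
  ext1 k
  rw [Matrix.mul_smul, Matrix.smul_mul, mul_pow_intertwine A Q G h k]

lemma kronA_mul_apply {p n : ℕ} (M : Matrix (Fin p × Fin 2) (Fin n) ℝ) (i : Fin p) (c : Fin n) :
    (kronA p * M) i c = ∑ m : Fin 2, M (i, m) c := by
  rw [Matrix.mul_apply, Fintype.sum_prod_type]
  simp only [kronA, Matrix.of_apply, ite_mul, one_mul, zero_mul]
  rw [Finset.sum_comm]
  refine Finset.sum_congr rfl fun m _ => ?_
  rw [Finset.sum_ite_eq' Finset.univ i]
  simp

lemma kronA_mul_apply' {p : ℕ} (M : Matrix (Fin p × Fin 2) (Fin p × Fin 2) ℝ)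
    (i : Fin p) (c : Fin p × Fin 2) :
    (kronA p * M) i c = ∑ m : Fin 2, M (i, m) c := by
  rw [Matrix.mul_apply, Fintype.sum_prod_type]
  simp only [kronA, Matrix.of_apply, ite_mul, one_mul, zero_mul]
  rw [Finset.sum_comm]
  refine Finset.sum_congr rfl fun m _ => ?_
  rw [Finset.sum_ite_eq' Finset.univ i]
  simp

lemma mul_kronAT_apply {p : ℕ} (M : Matrix (Fin p) (Fin p × Fin 2) ℝ) (r : Fin p) (j : Fin p) :
    (M * (kronA p)ᵀ) r j = ∑ l : Fin 2, M r (j, l) := by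
  rw [Matrix.mul_apply, Fintype.sum_prod_type]
  simp only [Matrix.transpose_apply, kronA, Matrix.of_apply, mul_ite, mul_one, mul_zero]
  rw [Finset.sum_comm]
  refine Finset.sum_congr rfl fun l _ => ?_
  rw [Finset.sum_ite_eq' Finset.univ j]
  simp

lemma mul_kronA_apply {p : ℕ} (G : Matrix (Fin p) (Fin p) ℝ) (i : Fin p) (jl : Fin p × Fin 2) :
    (G * kronA p) i jl = G i jl.1 := by
  rw [Matrix.mul_apply]
  simp only [kronA, Matrix.of_apply, mul_ite, mul_one, mul_zero]
  rw [Finset.sum_ite_eq Finset.univ jl.1]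
  simp

lemma kron_mul_Qbar {p : ℕ} (G : Matrix (Fin p) (Fin p) ℝ) (lam : Fin p → ℝ) :
    kronA p * Qbar G lam = G * kronA p := by
  ext i jl
  obtain ⟨j, l⟩ := jl
  rw [kronA_mul_apply', mul_kronA_apply]
  simp only [Qbar, Matrix.of_apply, Fin.sum_univ_two]
  by_cases h : i = j
  · subst h
    fin_cases l <;> simp [mul_comm] <;> try ring
  · simp [h]
    fin_cases l <;> simp

lemma kron_mul_Qtil {p : ℕ} (G : Matrix (Fin p) (Fin p) ℝ) (lam : Fin p → ℝ) :
    kronA p * Qtil G lam = G * kronA p := by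
  ext i jl
  obtain ⟨j, l⟩ := jl
  rw [kronA_mul_apply', mul_kronA_apply]
  simp only [Qtil, Matrix.of_apply, Fin.sum_univ_two]
  by_cases h : i = j
  · subst h
    fin_cases l <;> simp [mul_comm] <;> try ring
  · simp [h]
    fin_cases l <;> simp

lemma piHat_apply {p : ℕ} (θ : Fin p → ℝ) (jl : Fin p × Fin 2) :
    piHat θ jl = θ jl.1 / 2 := by
  simp only [piHat, Pi.smul_apply, smul_eq_mul, Matrix.vecMul, dotProduct, kronA,
    Matrix.of_apply, mul_ite, mul_one, mul_zero]
  rw [Finset.sum_ite_eq Finset.univ jl.1]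
  simp; ring

lemma key_dev {p : ℕ} (G : Matrix (Fin p) (Fin p) ℝ) (θ : Fin p → ℝ)
    (DsG : Matrix (Fin p) (Fin p) ℝ) (hDsG : IsDeviation G θ DsG)
    (Q : Matrix (Fin p × Fin 2) (Fin p × Fin 2) ℝ)
    (hAQ : kronA p * Q = G * kronA p)
    (Ds : Matrix (Fin p × Fin 2) (Fin p × Fin 2) ℝ)
    (hDs : IsDeviation Q (piHat θ) Ds) :
    kronA p * Ds * (kronA p)ᵀ = (2 : ℝ) • DsG := by
  have hexp : ∀ u : ℝ, kronA p * NormedSpace.exp (u • Q) = NormedSpace.exp (u • G) * kronA p := by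
    intro u
    apply exp_intertwine
    rw [Matrix.mul_smul, hAQ, Matrix.smul_mul]
  have hsum : ∀ (u : ℝ) (i j : Fin p) (l : Fin 2),
      ∑ m : Fin 2, NormedSpace.exp (u • Q) (i, m) (j, l) = NormedSpace.exp (u • G) i j := by
    intro u i j l
    have := congrFun (congrFun (hexp u) i) (j, l)
    rw [kronA_mul_apply', mul_kronA_apply] at this
    exact this
  ext i j
  have hL : (kronA p * Ds * (kronA p)ᵀ) i j = ∑ l : Fin 2, ∑ m : Fin 2, Ds (i, m) (j, l) := by
    rw [mul_kronAT_apply]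
    exact Finset.sum_congr rfl fun l _ => kronA_mul_apply' Ds i (j, l)
  rw [hL]
  have hval : ∀ m l : Fin 2, Ds (i, m) (j, l)
      = ∫ u in Set.Ioi (0:ℝ), (NormedSpace.exp (u • Q) (i, m) (j, l) - piHat θ (j, l)) :=
    fun m l => (hDs (i, m) (j, l)).2
  have hint : ∀ lm : Fin 2 × Fin 2, IntegrableOn
      (fun u => NormedSpace.exp (u • Q) (i, lm.2) (j, lm.1) - piHat θ (j, lm.1))
      (Set.Ioi (0:ℝ)) volume := fun lm => (hDs (i, lm.2) (j, lm.1)).1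
  calc ∑ l : Fin 2, ∑ m : Fin 2, Ds (i, m) (j, l)
      = ∑ lm : Fin 2 × Fin 2, ∫ u in Set.Ioi (0:ℝ),
          (NormedSpace.exp (u • Q) (i, lm.2) (j, lm.1) - piHat θ (j, lm.1)) := by
        rw [Fintype.sum_prod_type]
        exact Finset.sum_congr rfl fun l _ => Finset.sum_congr rfl fun m _ => hval m l
    _ = ∫ u in Set.Ioi (0:ℝ), ∑ lm : Fin 2 × Fin 2,
          (NormedSpace.exp (u • Q) (i, lm.2) (j, lm.1) - piHat θ (j, lm.1)) := by
        rw [MeasureTheory.integral_finset_sum Finset.univ (fun lm _ => hint lm)]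
    _ = ∫ u in Set.Ioi (0:ℝ), (2 : ℝ) * (NormedSpace.exp (u • G) i j - θ j) := by
        congr 1; ext u
        rw [Fintype.sum_prod_type]
        have h1 : ∀ l : Fin 2, ∑ m : Fin 2,
            (NormedSpace.exp (u • Q) (i, m) (j, l) - piHat θ (j, l))
            = NormedSpace.exp (u • G) i j - θ j := by
          intro l
          rw [Finset.sum_sub_distrib, hsum u i j l]
          simp [piHat_apply, Fin.sum_univ_two]
          ring
        rw [Finset.sum_congr rfl fun l _ => h1 l]
        simp [Fin.sum_univ_two]
        try ring
    _ = (2 : ℝ) * ∫ u in Set.Ioi (0:ℝ), (NormedSpace.exp (u • G) i j - θ j) := by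
        rw [MeasureTheory.integral_const_mul]
    _ = ((2 : ℝ) • DsG) i j := by
        rw [Matrix.smul_apply, (hDsG i j).2, smul_eq_mul]

theorem stmt10 {p : ℕ} (G : Matrix (Fin p) (Fin p) ℝ) (lam : Fin p → ℝ)
    (hG : IsGenerator G) (hirr : IsIrreducibleGen G) (hslow : IsSlow G lam)
    (θ : Fin p → ℝ) (hθ : IsStationaryDist G θ)
    (DsG : Matrix (Fin p) (Fin p) ℝ) (hDsG : IsDeviation G θ DsG)
    (DsQb DsQt : Matrix (Fin p × Fin 2) (Fin p × Fin 2) ℝ)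
    (hDsQb : IsDeviation (Qbar G lam) (piHat θ) DsQb)
    (hDsQt : IsDeviation (Qtil G lam) (piHat θ) DsQt) :
    kronA p * DsQt * (kronA p)ᵀ = (2 : ℝ) • DsG ∧
    kronA p * DsQb * (kronA p)ᵀ = (2 : ℝ) • DsG := by
  exact ⟨key_dev G θ DsG hDsG _ (kron_mul_Qtil G lam) DsQt hDsQt,
         key_dev G θ DsG hDsG _ (kron_mul_Qbar G lam) DsQb hDsQb⟩
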